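/- Let X ⊂ Z^n be a finite set satisfying the support hyperplane property, and let z ∈ conv(X) ∩ Z^n with z ∉ X. Then there exist disjoint subsets X₁, X₂ ⊆ X with X₁ ∪ X₂ = X such that both X₁ ∪ {z} and X₂ ∪ {z} satisfy the support hyperplane property. -/

import Mathlib

/-- Coordinatewise cast of an integer point to `ℝⁿ`. -/
def icast {n : ℕ} (v : Fin n → ℤ) : Fin n → ℝ := fun i => (v i : ℝ)

/-- The support hyperplane property. -/
def SHP {n : ℕ} (X : Finset (Fin n → ℤ)) : Prop :=
  ∀ y ∈ X, ∃ (f : Fin n → ℝ) (g : ℝ),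
    (∑ i, f i * (y i : ℝ)) = g ∧ ∀ x ∈ X, x ≠ y → (∑ i, f i * (x i : ℝ)) < g

lemma icast_injective {n : ℕ} : Function.Injective (icast (n := n)) := by
  intro a b hab
  funext i
  have := congrFun hab i
  simp only [icast] at this
  exact_mod_cast this

/-- A generic functional: for any finite set of nonzero vectors there is a functional
nonvanishing on all of them. -/
lemma exists_generic {n : ℕ} (S : Finset (Fin n → ℝ)) (hS : ∀ v ∈ S, v ≠ 0) :
    ∃ f : Fin n → ℝ, ∀ v ∈ S, (∑ i, f i * v i) ≠ 0 := by
  classical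
  induction S using Finset.induction_on with
  | empty => exact ⟨0, by simp⟩
  | insert v S hvS ih =>
    obtain ⟨f, hf⟩ := ih (fun u hu => hS u (Finset.mem_insert_of_mem hu))
    have hvne : v ≠ 0 := hS v (Finset.mem_insert_self _ _)
    set D : (Fin n → ℝ) → ℝ := fun u => ∑ i, v i * u i with hD
    set E : (Fin n → ℝ) → ℝ := fun u => -(∑ i, f i * u i) / D u with hE
    obtain ⟨ε, hε⟩ := Infinite.exists_notMem_finset (insert (0 : ℝ) ((insert v S).image E))
    have hDv : 0 < D v := by
      have hex : ∃ i, v i ≠ 0 := by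
        by_contra h
        push_neg at h
        exact hvne (funext h)
      obtain ⟨i₀, hi₀⟩ := hex
      refine Finset.sum_pos' (fun i _ => mul_self_nonneg _) ⟨i₀, Finset.mem_univ _, ?_⟩
      exact mul_self_pos.mpr hi₀
    have hexp : ∀ u : Fin n → ℝ,
        (∑ i, (f + ε • v) i * u i) = (∑ i, f i * u i) + ε * D u := by
      intro u
      simp only [Pi.add_apply, Pi.smul_apply, smul_eq_mul, add_mul, Finset.sum_add_distrib, hD,
        Finset.mul_sum]
      ring_nf
    refine ⟨f + ε • v, ?_⟩
    intro u hu
    rw [hexp]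
    rcases Finset.mem_insert.mp hu with rfl | huS
    · intro hzero
      apply hε
      apply Finset.mem_insert_of_mem
      refine Finset.mem_image.mpr ⟨u, Finset.mem_insert_self _ _, ?_⟩
      rw [hE]
      field_simp
      linarith
    · by_cases hDu : D u = 0
      · rw [hDu, mul_zero, add_zero]
        exact hf u huS
      · intro hzero
        apply hε
        apply Finset.mem_insert_of_mem
        refine Finset.mem_image.mpr ⟨u, Finset.mem_insert_of_mem huS, ?_⟩
        rw [hE]
        field_simp
        linarith

/-- Supporting hyperplanes of vertices of `X` strictly separate any point of the hull
of `X` not in `X`. -/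
lemma hull_lt {n : ℕ} (X : Finset (Fin n → ℤ)) (z : Fin n → ℤ)
    (hz : icast z ∈ convexHull ℝ (icast '' (X : Set (Fin n → ℤ)))) (hzX : z ∉ X)
    (y : Fin n → ℤ) (hy : y ∈ X) (f : Fin n → ℝ) (g : ℝ)
    (heq : (∑ i, f i * (y i : ℝ)) = g)
    (hlt : ∀ x ∈ X, x ≠ y → (∑ i, f i * (x i : ℝ)) < g) :
    (∑ i, f i * (z i : ℝ)) < g := by
  classical
  set Y : Finset (Fin n → ℝ) := X.image icast with hY
  have hYcoe : icast '' (X : Set (Fin n → ℤ)) = (Y : Set (Fin n → ℝ)) := by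
    rw [hY, Finset.coe_image]
  rw [hYcoe] at hz
  obtain ⟨w, hw0, hw1, hwz⟩ := Finset.mem_convexHull'.mp hz
  have hzi : ∀ i, (z i : ℝ) = ∑ v ∈ Y, w v * v i := by
    intro i
    have := congrFun hwz i
    simp only [Finset.sum_apply, Pi.smul_apply, smul_eq_mul] at this
    exact this.symm
  -- express the functional at z via the weights
  have hL : (∑ i, f i * (z i : ℝ)) = ∑ v ∈ Y, w v * ∑ i, f i * v i := by
    calc (∑ i, f i * (z i : ℝ)) = ∑ i, ∑ v ∈ Y, f i * (w v * v i) := by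
          refine Finset.sum_congr rfl fun i _ => ?_
          rw [hzi i, Finset.mul_sum]
      _ = ∑ v ∈ Y, ∑ i, f i * (w v * v i) := Finset.sum_comm
      _ = ∑ v ∈ Y, w v * ∑ i, f i * v i := by
          refine Finset.sum_congr rfl fun v _ => ?_
          rw [Finset.mul_sum]
          exact Finset.sum_congr rfl fun i _ => by ring
  -- per-vertex bounds
  have hle : ∀ v ∈ Y, (∑ i, f i * v i) ≤ g := by
    intro v hv
    obtain ⟨x, hx, rfl⟩ := Finset.mem_image.mp hv
    by_cases hxy : x = y
    · subst hxy; exact le_of_eq heq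
    · exact le_of_lt (hlt x hx hxy)
  have hstrict : ∀ v ∈ Y, v ≠ icast y → (∑ i, f i * v i) < g := by
    intro v hv hvy
    obtain ⟨x, hx, rfl⟩ := Finset.mem_image.mp hv
    exact hlt x hx (fun h => hvy (by rw [h]))
  have hyY : icast y ∈ Y := Finset.mem_image.mpr ⟨y, hy, rfl⟩
  -- there is a vertex other than y with positive weight
  have hex : ∃ v ∈ Y, v ≠ icast y ∧ 0 < w v := by
    by_contra h
    push_neg at h
    have hwzero : ∀ v ∈ Y, v ≠ icast y → w v = 0 := by
      intro v hv hvy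
      exact le_antisymm (h v hv hvy) (hw0 v hv)
    have hwy : w (icast y) = 1 := by
      rw [← hw1]
      exact (Finset.sum_eq_single (icast y) (fun v hv hvy => hwzero v hv hvy)
        (fun h' => absurd hyY h')).symm
    have hzy : icast z = icast y := by
      rw [← hwz]
      rw [Finset.sum_eq_single (icast y)
        (fun v hv hvy => by rw [hwzero v hv hvy, zero_smul])
        (fun h' => absurd hyY h')]
      rw [hwy, one_smul]
    exact hzX (icast_injective hzy ▸ hy)
  obtain ⟨v₀, hv₀Y, hv₀y, hv₀pos⟩ := hex
  have hfinal : (∑ v ∈ Y, w v * ∑ i, f i * v i) < ∑ v ∈ Y, w v * g := by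
    refine Finset.sum_lt_sum (fun v hv => mul_le_mul_of_nonneg_left (hle v hv) (hw0 v hv)) ?_
    exact ⟨v₀, hv₀Y, mul_lt_mul_of_pos_left (hstrict v₀ hv₀Y hv₀y) hv₀pos⟩
  rw [hL]
  calc (∑ v ∈ Y, w v * ∑ i, f i * v i) < ∑ v ∈ Y, w v * g := hfinal
    _ = (∑ v ∈ Y, w v) * g := by rw [Finset.sum_mul]
    _ = g := by rw [hw1, one_mul]

theorem stmt_2 {n : ℕ} (X : Finset (Fin n → ℤ)) (hshp : SHP X)
    (z : Fin n → ℤ) (hz : icast z ∈ convexHull ℝ (icast '' (X : Set (Fin n → ℤ))))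
    (hzX : z ∉ X) :
    ∃ X₁ X₂ : Finset (Fin n → ℤ), X₁ ⊆ X ∧ X₂ ⊆ X ∧ Disjoint X₁ X₂ ∧ X₁ ∪ X₂ = X ∧
      SHP (X₁ ∪ {z}) ∧ SHP (X₂ ∪ {z}) := by
  classical
  -- a generic functional not constant on the differences x - z
  obtain ⟨f, hf⟩ := exists_generic (X.image (fun x => icast x - icast z))
    (by
      intro v hv
      obtain ⟨x, hx, rfl⟩ := Finset.mem_image.mp hv
      intro h
      exact hzX (icast_injective (sub_eq_zero.mp h) ▸ hx))
  have hfne : ∀ x ∈ X, (∑ i, f i * (x i : ℝ)) ≠ (∑ i, f i * (z i : ℝ)) := by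
    intro x hx h
    have hv : icast x - icast z ∈ X.image (fun x => icast x - icast z) :=
      Finset.mem_image.mpr ⟨x, hx, rfl⟩
    apply hf _ hv
    have : (∑ i, f i * ((icast x - icast z) i)) =
        (∑ i, f i * (x i : ℝ)) - (∑ i, f i * (z i : ℝ)) := by
      simp only [Pi.sub_apply, icast, mul_sub, Finset.sum_sub_distrib]
    rw [this, h, sub_self]
  set X₁ : Finset (Fin n → ℤ) :=
    X.filter (fun x => (∑ i, f i * (x i : ℝ)) < (∑ i, f i * (z i : ℝ))) with hX₁
  set X₂ : Finset (Fin n → ℤ) :=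
    X.filter (fun x => ¬ (∑ i, f i * (x i : ℝ)) < (∑ i, f i * (z i : ℝ))) with hX₂
  have hsub₁ : X₁ ⊆ X := Finset.filter_subset _ _
  have hsub₂ : X₂ ⊆ X := Finset.filter_subset _ _
  refine ⟨X₁, X₂, hsub₁, hsub₂, Finset.disjoint_filter_filter_not X X _,
    Finset.filter_union_filter_not_eq _ X, ?_, ?_⟩
  · -- SHP (X₁ ∪ {z})
    intro y hy
    rcases Finset.mem_union.mp hy with hy₁ | hyz
    · -- y ∈ X₁, use its supporting hyperplane for X
      obtain ⟨fy, gy, heq, hlt⟩ := hshp y (hsub₁ hy₁)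
      refine ⟨fy, gy, heq, ?_⟩
      intro x hx hxy
      rcases Finset.mem_union.mp hx with hx₁ | hxz
      · exact hlt x (hsub₁ hx₁) hxy
      · rw [Finset.mem_singleton.mp hxz]
        exact hull_lt X z hz hzX y (hsub₁ hy₁) fy gy heq hlt
    · -- y = z, use f
      rw [Finset.mem_singleton.mp hyz]
      refine ⟨f, ∑ i, f i * (z i : ℝ), rfl, ?_⟩
      intro x hx hxz
      rcases Finset.mem_union.mp hx with hx₁ | hxz'
      · exact (Finset.mem_filter.mp hx₁).2
      · exact absurd (Finset.mem_singleton.mp hxz') hxz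
  · -- SHP (X₂ ∪ {z})
    intro y hy
    rcases Finset.mem_union.mp hy with hy₂ | hyz
    · obtain ⟨fy, gy, heq, hlt⟩ := hshp y (hsub₂ hy₂)
      refine ⟨fy, gy, heq, ?_⟩
      intro x hx hxy
      rcases Finset.mem_union.mp hx with hx₂ | hxz
      · exact hlt x (hsub₂ hx₂) hxy
      · rw [Finset.mem_singleton.mp hxz]
        exact hull_lt X z hz hzX y (hsub₂ hy₂) fy gy heq hlt
    · -- y = z, use -f
      rw [Finset.mem_singleton.mp hyz]
      refine ⟨-f, ∑ i, (-f) i * (z i : ℝ), rfl, ?_⟩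
      intro x hx hxz
      rcases Finset.mem_union.mp hx with hx₂ | hxz'
      · have hge : (∑ i, f i * (z i : ℝ)) < (∑ i, f i * (x i : ℝ)) := by
          have h1 := (Finset.mem_filter.mp hx₂).2
          have h2 := hfne x ((Finset.mem_filter.mp hx₂).1)
          rcases lt_or_eq_of_le (not_lt.mp h1) with h | h
          · exact h
          · exact absurd h.symm h2
        simp only [Pi.neg_apply, neg_mul, Finset.sum_neg_distrib]
        linarith
      · exact absurd (Finset.mem_singleton.mp hxz') hxz
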